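/- Let a, b, m be integers with 0 ≤ a ≤ b ≤ m and let G(t) = (b−a)! / (t+a)_{b−a+1}. Then for every prime number p with p > √m, every integer k with 0 ≤ k ≤ m, and every integer λ ≥ 0, the p-adic valuation of the rational number (G(t)·(t+k))^{(λ)}|_{t=−k} satisfies v_p( (G(t)(t+k))^{(λ)}|_{t=−k} ) ≥ −λ + ⌊(b−a)/p⌋ − ⌊(k−a)/p⌋ − ⌊(b−k)/p⌋. -/

import Mathlib

/-- The Pochhammer symbol `(x)ₖ = x(x+1)⋯(x+k-1)` for a real `x`. -/
noncomputable def poch (x : ℝ) (k : ℕ) : ℝ := ∏ m ∈ Finset.range k, (x + m)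

/- ### Auxiliary lemmas -/

lemma sum_inv_poch : ∀ (n : ℕ) (x : ℝ), (∀ i ∈ Finset.range (n+1), x + i ≠ 0) →
    (n.factorial : ℝ) / ∏ i ∈ Finset.range (n+1), (x + i)
      = ∑ j ∈ Finset.range (n+1), (-1:ℝ)^j * (n.choose j) * (x + j)⁻¹ := by
  intro n
  induction n with
  | zero => intro x hx; simp [div_eq_mul_inv]
  | succ n ih =>
    intro x hx
    have hx0 : x ≠ 0 := by simpa using hx 0 (by simp)
    have hx' : ∀ i ∈ Finset.range (n+1), x + i ≠ 0 := fun i hi => hx i (by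
      simp only [Finset.mem_range] at hi ⊢; omega)
    have hx1 : ∀ i ∈ Finset.range (n+1), (x+1) + i ≠ 0 := by
      intro i hi
      have := hx (i+1) (by simp only [Finset.mem_range] at hi ⊢; omega)
      push_cast at this
      intro heq; apply this; linarith
    have key : ∑ j ∈ Finset.range (n+2), (-1:ℝ)^j * ((n+1).choose j) * (x + j)⁻¹
        = (∑ j ∈ Finset.range (n+1), (-1:ℝ)^j * (n.choose j) * (x + j)⁻¹)
          - ∑ j ∈ Finset.range (n+1), (-1:ℝ)^j * (n.choose j) * ((x+1) + j)⁻¹ := by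
      rw [Finset.sum_range_succ' (fun j => (-1:ℝ)^j * ((n+1).choose j) * (x + j)⁻¹)]
      have h1 : ∀ j ∈ Finset.range (n+1), (-1:ℝ)^(j+1) * ((n+1).choose (j+1)) * (x + (j+1:ℕ))⁻¹
          = (-1:ℝ)^(j+1) * (n.choose (j+1)) * (x + (j+1:ℕ))⁻¹
            + (-(-1:ℝ)^j) * (n.choose j) * ((x+1) + j)⁻¹ := by
        intro j hj
        rw [Nat.choose_succ_succ']
        have : ((x:ℝ) + (j+1:ℕ)) = (x+1) + j := by push_cast; ring
        rw [this]
        push_cast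
        ring
      rw [Finset.sum_congr rfl h1, Finset.sum_add_distrib]
      have h2 : ∑ j ∈ Finset.range (n+1), (-1:ℝ)^(j+1) * (n.choose (j+1)) * (x + (j+1:ℕ))⁻¹
            + (-1:ℝ)^0 * (((n+1).choose 0 : ℕ) : ℝ) * (x + (0:ℕ))⁻¹
          = ∑ j ∈ Finset.range (n+2), (-1:ℝ)^j * (n.choose j) * (x + j)⁻¹ := by
        rw [Finset.sum_range_succ' (fun j => (-1:ℝ)^j * (n.choose j) * (x + j)⁻¹)]
        norm_num
      have h3 : ∑ j ∈ Finset.range (n+2), (-1:ℝ)^j * (n.choose j) * (x + j)⁻¹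
          = ∑ j ∈ Finset.range (n+1), (-1:ℝ)^j * (n.choose j) * (x + j)⁻¹ := by
        rw [Finset.sum_range_succ]
        simp [Nat.choose_succ_self]
      have h4 : ∀ j ∈ Finset.range (n+1), (-(-1:ℝ)^j) * (n.choose j) * ((x+1) + j)⁻¹
          = -((-1:ℝ)^j * (n.choose j) * ((x+1) + j)⁻¹) := by intro j hj; ring
      rw [Finset.sum_congr rfl h4, Finset.sum_neg_distrib]
      linarith [h2, h3]
    rw [show n + 1 + 1 = n + 2 from rfl, key, ← ih x hx', ← ih (x+1) hx1]
    set P := ∏ i ∈ Finset.range (n+1), (x + (i:ℝ)) with hPdef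
    set P1 := ∏ i ∈ Finset.range (n+1), ((x+1) + (i:ℝ)) with hP1def
    set B := ∏ i ∈ Finset.range (n+2), (x + (i:ℝ)) with hBdef
    have hprodx : P ≠ 0 := Finset.prod_ne_zero_iff.mpr hx'
    have hprodx1 : P1 ≠ 0 := Finset.prod_ne_zero_iff.mpr hx1
    have hbig : B = x * P1 := by
      rw [hBdef, Finset.prod_range_succ' (fun i => x + (i:ℝ))]
      simp only [Nat.cast_zero, add_zero]
      rw [mul_comm]
      congr 1
      exact Finset.prod_congr rfl fun i hi => by push_cast; ring
    have hprodbig : B ≠ 0 := by rw [hbig]; exact mul_ne_zero hx0 hprodx1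
    have hbig2 : B = P * (x + (n+1:ℕ)) := by rw [hBdef, Finset.prod_range_succ]
    rw [div_sub_div _ _ hprodx hprodx1, div_eq_div_iff hprodbig (mul_ne_zero hprodx hprodx1)]
    push_cast at hbig2
    push_cast [Nat.factorial_succ]
    linear_combination (n.factorial : ℝ) * P * hbig - (n.factorial : ℝ) * P1 * hbig2

lemma evEq_iteratedDeriv {f g : ℝ → ℝ} {x : ℝ} (n : ℕ) (h : f =ᶠ[nhds x] g) :
    iteratedDeriv n f =ᶠ[nhds x] iteratedDeriv n g := by
  induction n with
  | zero => simpa [iteratedDeriv_zero]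
  | succ n ih => rw [iteratedDeriv_succ, iteratedDeriv_succ]; exact ih.deriv

lemma deriv_c_zpow (c e : ℝ) (M : ℤ) (x : ℝ) :
    deriv (fun y => c * (y + e) ^ M) x = c * M * (x + e) ^ (M - 1) := by
  rw [deriv_const_mul_field]
  have h2 : deriv (fun y : ℝ => (y + e) ^ M) x = deriv (fun z : ℝ => z ^ M) (x + e) :=
    deriv_comp_add_const (fun z => z ^ M) e x
  rw [h2, deriv_zpow]
  ring

lemma diff_c_zpow (c e : ℝ) (M : ℤ) (x : ℝ) (h : x + e ≠ 0 ∨ c = 0) :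
    DifferentiableAt ℝ (fun y => c * (y + e) ^ M) x := by
  rcases h with h | h
  · exact ((differentiableAt_id.add_const e).zpow (by simpa using Or.inl h)).const_mul c
  · have : (fun y : ℝ => c * (y + e) ^ M) = fun _ => 0 := by funext y; rw [h, zero_mul]
    rw [this]; exact differentiableAt_const 0

lemma isOpen_good {ι : Type*} (s : Finset ι) (c e : ι → ℝ) :
    IsOpen {y : ℝ | ∀ i ∈ s, y + e i ≠ 0 ∨ c i = 0} := by
  have hrw : {y : ℝ | ∀ i ∈ s, y + e i ≠ 0 ∨ c i = 0}
      = ⋂ i ∈ s, {y | y + e i ≠ 0 ∨ c i = 0} := by ext y; simp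
  rw [hrw]
  refine isOpen_biInter_finset fun i _ => ?_
  by_cases hc : c i = 0
  · have : {y : ℝ | y + e i ≠ 0 ∨ c i = 0} = Set.univ := by ext y; simp [hc]
    rw [this]; exact isOpen_univ
  · have : {y : ℝ | y + e i ≠ 0 ∨ c i = 0} = (fun y => y + e i) ⁻¹' ({0}ᶜ) := by
      ext y; simp [hc, add_eq_zero_iff_eq_neg]
    rw [this]
    exact IsOpen.preimage (by continuity) isOpen_compl_singleton

lemma iter_deriv_sum_inv {ι : Type*} (s : Finset ι) (c e : ι → ℝ) (C0 : ℝ) :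
    ∀ (M : ℕ) (x : ℝ), (∀ i ∈ s, x + e i ≠ 0 ∨ c i = 0) →
    iteratedDeriv M (fun t => C0 + ∑ i ∈ s, c i * (t + e i) ^ (-1 : ℤ)) x
      = (if M = 0 then C0 else 0)
        + ∑ i ∈ s, (c i * (-1)^M * M.factorial) * (x + e i) ^ (-1 - (M : ℤ)) := by
  intro M
  induction M with
  | zero =>
    intro x hx
    rw [iteratedDeriv_zero]
    norm_num
  | succ M ih =>
    intro x hx
    have hU : IsOpen {y : ℝ | ∀ i ∈ s, y + e i ≠ 0 ∨ c i = 0} := isOpen_good s c e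
    have hev : iteratedDeriv M (fun t => C0 + ∑ i ∈ s, c i * (t + e i) ^ (-1 : ℤ))
        =ᶠ[nhds x] fun y => (if M = 0 then C0 else 0)
          + ∑ i ∈ s, (c i * (-1)^M * M.factorial) * (y + e i) ^ (-1 - (M : ℤ)) := by
      filter_upwards [hU.mem_nhds hx] with y hy using ih y hy
    rw [iteratedDeriv_succ, hev.deriv_eq, deriv_const_add]
    have hdiff : ∀ i ∈ s, DifferentiableAt ℝ
        (fun y => (c i * (-1)^M * M.factorial) * (y + e i) ^ (-1 - (M : ℤ))) x := by
      intro i hi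
      refine diff_c_zpow _ _ _ _ ?_
      rcases hx i hi with h | h
      · exact Or.inl h
      · exact Or.inr (by rw [h, zero_mul, zero_mul])
    rw [deriv_fun_sum hdiff]
    have hif : (if M + 1 = 0 then C0 else 0) = 0 := by simp
    rw [hif, zero_add]
    refine Finset.sum_congr rfl fun i _ => ?_
    rw [deriv_c_zpow]
    have hexp : (-1 - (M:ℤ)) - 1 = -1 - ((M+1 : ℕ) : ℤ) := by push_cast; ring
    rw [hexp]
    push_cast [Nat.factorial_succ, pow_succ]
    ring

lemma padic_sum_bound {p : ℕ} [Fact p.Prime] {ι : Type*} (s : Finset ι) (f : ι → ℚ) (β : ℤ) :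
    (∀ i ∈ s, f i = 0 ∨ β ≤ padicValRat p (f i)) →
    (∑ i ∈ s, f i) = 0 ∨ β ≤ padicValRat p (∑ i ∈ s, f i) := by
  classical
  induction s using Finset.induction_on with
  | empty => intro _; left; simp
  | @insert a s ha ih =>
    intro h
    rw [Finset.sum_insert ha]
    have hs := ih (fun i hi => h i (Finset.mem_insert_of_mem hi))
    rcases h a (Finset.mem_insert_self a s) with hfa | hfa
    · rw [hfa, zero_add]; exact hs
    · rcases hs with hs0 | hs0
      · rw [hs0, add_zero]; right; exact hfa
      · by_cases htot : f a + ∑ i ∈ s, f i = 0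
        · left; exact htot
        · right
          calc β ≤ min (padicValRat p (f a)) (padicValRat p (∑ i ∈ s, f i)) :=
                le_min hfa hs0
            _ ≤ padicValRat p (f a + ∑ i ∈ s, f i) :=
                padicValRat.min_le_padicValRat_add htot

/- ### Main theorem -/

set_option maxHeartbeats 2000000 in
theorem brick_denominator_padic_valuation (a b m : ℕ) (hab : a ≤ b) (hbm : b ≤ m)
    (p : ℕ) (hp : p.Prime) (hpm : Real.sqrt m < (p : ℝ))
    (k : ℕ) (hk : k ≤ m) (lam : ℕ) (h : ℝ → ℝ)
    (hagree : ∀ t : ℝ, t ≠ -(k : ℝ) →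
      h t = ((b - a).factorial : ℝ) * (t + k) / poch (t + a) (b - a + 1))
    (hcont : ContinuousAt h (-(k : ℝ))) :
    ∀ q : ℚ, q ≠ 0 → iteratedDeriv lam h (-(k : ℝ)) = (q : ℝ) →
      -(lam : ℤ) + ⌊((b : ℚ) - (a : ℚ)) / (p : ℚ)⌋ - ⌊((k : ℚ) - (a : ℚ)) / (p : ℚ)⌋
          - ⌊((b : ℚ) - (k : ℚ)) / (p : ℚ)⌋
        ≤ padicValRat p q := by
  intro q hq0 hqval
  have hFact : Fact p.Prime := ⟨hp⟩
  set n := b - a with hn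
  -- real-side data
  set x0 : ℝ := -(k : ℝ) with hx0def
  set c : ℕ → ℝ := fun j => (-1:ℝ)^j * (n.choose j) * ((k:ℝ) - a - j) with hc
  set e : ℕ → ℝ := fun j => (a:ℝ) + j with he
  set S0 : ℝ := ∑ j ∈ Finset.range (n+1), (-1:ℝ)^j * (n.choose j) with hS0
  set H : ℝ → ℝ := fun t => S0 + ∑ j ∈ Finset.range (n+1), c j * (t + e j) ^ (-1:ℤ) with hH
  have hchoose_ne : ∀ j ∈ Finset.range (n+1), ((n.choose j : ℕ) : ℝ) ≠ 0 := by
    intro j hj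
    have : 0 < n.choose j := Nat.choose_pos (by simpa [Nat.lt_succ_iff] using hj)
    positivity
  have hx0U : ∀ j ∈ Finset.range (n+1), x0 + e j ≠ 0 ∨ c j = 0 := by
    intro j hj
    by_cases hak : a + j = k
    · right
      have hz : ((k:ℝ) - a - j) = 0 := by
        rw [← hak]; push_cast; ring
      simp [hc, hz]
    · left
      simp only [hx0def, he]
      intro heq
      apply hak
      have : ((a + j : ℕ) : ℝ) = (k : ℝ) := by push_cast; linarith
      exact_mod_cast this
  have hcz_iff : ∀ j ∈ Finset.range (n+1), c j = 0 → a + j = k := by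
    intro j hj hcj
    rw [hc] at hcj
    simp only at hcj
    rcases mul_eq_zero.mp hcj with h1 | h1
    · rcases mul_eq_zero.mp h1 with h2 | h2
      · exact absurd h2 (by positivity)
      · exact absurd h2 (hchoose_ne j hj)
    · have : ((a + j : ℕ) : ℝ) = (k : ℝ) := by push_cast; linarith
      exact_mod_cast this
  -- Step A : h agrees with H near x0
  have hHeq : ∀ t : ℝ, (∀ j ∈ Finset.range (n+1), t + e j ≠ 0 ∨ c j = 0) → t ≠ x0 →
      h t = H t := by
    intro t htU htne
    have hall : ∀ i ∈ Finset.range (n+1), (t + (a:ℝ)) + i ≠ 0 := by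
      intro i hi
      rcases htU i hi with h' | h'
      · intro h0; apply h'; simp only [he]; linarith
      · have hik : a + i = k := hcz_iff i hi h'
        intro h0
        apply htne
        have : ((a + i : ℕ) : ℝ) = (k:ℝ) := by exact_mod_cast congrArg (Nat.cast : ℕ → ℝ) hik
        push_cast at this
        rw [hx0def]; linarith
    have hsum := sum_inv_poch n (t + (a:ℝ)) hall
    have hpoch : poch (t + (a:ℝ)) (n+1) = ∏ i ∈ Finset.range (n+1), ((t + (a:ℝ)) + i) := rfl
    rw [hagree t htne, hpoch]
    rw [mul_comm ((n.factorial : ℝ)) (t + (k:ℝ)), mul_div_assoc, hsum, Finset.mul_sum]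
    simp only [hH]
    rw [hS0, ← Finset.sum_add_distrib]
    refine Finset.sum_congr rfl fun j hj => ?_
    have hne : (t + (a:ℝ)) + j ≠ 0 := hall j hj
    have hte : t + e j = (t + (a:ℝ)) + j := by rw [he]; ring
    rw [hc, hte]
    simp only [zpow_neg_one]
    field_simp
    ring
  have hUopen : IsOpen {y : ℝ | ∀ j ∈ Finset.range (n+1), y + e j ≠ 0 ∨ c j = 0} :=
    isOpen_good _ c e
  have hUx0mem : {y : ℝ | ∀ j ∈ Finset.range (n+1), y + e j ≠ 0 ∨ c j = 0} ∈ nhds x0 :=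
    hUopen.mem_nhds hx0U
  have hHdiff : DifferentiableAt ℝ H x0 := by
    rw [hH]
    exact (DifferentiableAt.fun_sum fun i hi => diff_c_zpow _ _ _ _ (hx0U i hi)).const_add S0
  have hx0H : h x0 = H x0 := by
    have hmem : ∀ᶠ t in nhdsWithin x0 {x0}ᶜ, h t = H t := by
      filter_upwards [mem_nhdsWithin_of_mem_nhds hUx0mem, self_mem_nhdsWithin] with t ht hne
      exact hHeq t ht hne
    have h1 : Filter.Tendsto h (nhdsWithin x0 {x0}ᶜ) (nhds (h x0)) :=
      hcont.continuousWithinAt.tendsto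
    have h2 : Filter.Tendsto h (nhdsWithin x0 {x0}ᶜ) (nhds (H x0)) :=
      Filter.Tendsto.congr' (hmem.mono fun t ht => ht.symm)
        hHdiff.continuousAt.continuousWithinAt.tendsto
    exact tendsto_nhds_unique h1 h2
  have hevHq : h =ᶠ[nhds x0] H := by
    filter_upwards [hUx0mem] with t ht
    by_cases hne : t = x0
    · rw [hne]; exact hx0H
    · exact hHeq t ht hne
  -- Step B : compute the iterated derivative
  have hiter : iteratedDeriv lam h x0
      = (if lam = 0 then S0 else 0)
        + ∑ j ∈ Finset.range (n+1), (c j * (-1)^lam * lam.factorial) * (x0 + e j) ^ (-1 - (lam : ℤ)) := by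
    rw [(evEq_iteratedDeriv lam hevHq).eq_of_nhds, hH]
    exact iter_deriv_sum_inv _ c e S0 lam x0 hx0U
  -- Step C : the value is the cast of an explicit rational
  set cq : ℕ → ℚ := fun j => (-1:ℚ)^j * (n.choose j) * ((k:ℚ) - a - j) with hcq
  set dq : ℕ → ℚ := fun j => (a:ℚ) + j - k with hdq
  set Qv : ℚ := (if lam = 0 then (∑ j ∈ Finset.range (n+1), (-1:ℚ)^j * (n.choose j)) else 0)
      + ∑ j ∈ Finset.range (n+1), (cq j * (-1)^lam * lam.factorial) * (dq j) ^ (-1 - (lam : ℤ))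
    with hQv
  have hcast : ((Qv : ℚ) : ℝ)
      = (if lam = 0 then S0 else 0)
        + ∑ j ∈ Finset.range (n+1), (c j * (-1)^lam * lam.factorial) * (x0 + e j) ^ (-1 - (lam : ℤ)) := by
    rw [hQv, Rat.cast_add]
    congr 1
    · split_ifs
      · rw [Rat.cast_sum, hS0]
        refine Finset.sum_congr rfl fun j hj => ?_
        push_cast
        ring
      · exact Rat.cast_zero
    · rw [Rat.cast_sum]
      refine Finset.sum_congr rfl fun j hj => ?_
      rw [Rat.cast_mul, Rat.cast_zpow]
      have hd : ((dq j : ℚ) : ℝ) = x0 + e j := by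
        rw [hdq, hx0def, he]; push_cast; ring
      have hcc : ((cq j * (-1)^lam * lam.factorial : ℚ) : ℝ) = c j * (-1)^lam * lam.factorial := by
        rw [hcq, hc]; push_cast; ring
      rw [hd, hcc]
  have hqQv : q = Qv := by
    have : (q : ℝ) = ((Qv : ℚ) : ℝ) := by
      rw [← hqval, hiter, hcast]
    exact_mod_cast this
  -- Step D : the valuation bound
  have hp2 : m < p ^ 2 := by
    have hppos : (0:ℝ) < (p:ℝ) := by exact_mod_cast hp.pos
    have := (Real.sqrt_lt' hppos).mp hpm
    exact_mod_cast this
  have hppos : (0:ℤ) < (p:ℤ) := by exact_mod_cast hp.pos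
  -- rewrite the floors
  have hfl1 : ⌊((b : ℚ) - (a : ℚ)) / (p : ℚ)⌋ = ((n:ℤ)) / (p:ℤ) := by
    rw [show ((b : ℚ) - (a : ℚ)) = (((n:ℤ) : ℤ) : ℚ) by
      rw [hn]; push_cast [Nat.cast_sub hab]; ring]
    exact_mod_cast Rat.floor_intCast_div_natCast (n:ℤ) p
  set X : ℤ := (k:ℤ) - (a:ℤ) with hX
  set Y : ℤ := (b:ℤ) - (k:ℤ) with hY
  have hfl2 : ⌊((k : ℚ) - (a : ℚ)) / (p : ℚ)⌋ = X / (p:ℤ) := by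
    rw [show ((k : ℚ) - (a : ℚ)) = ((X : ℤ) : ℚ) by rw [hX]; push_cast; ring]
    exact_mod_cast Rat.floor_intCast_div_natCast X p
  have hfl3 : ⌊((b : ℚ) - (k : ℚ)) / (p : ℚ)⌋ = Y / (p:ℤ) := by
    rw [show ((b : ℚ) - (k : ℚ)) = ((Y : ℤ) : ℚ) by rw [hY]; push_cast; ring]
    exact_mod_cast Rat.floor_intCast_div_natCast Y p
  rw [hfl1, hfl2, hfl3]
  set δ : ℤ := (n:ℤ)/(p:ℤ) - X/(p:ℤ) - Y/(p:ℤ) with hδ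
  have hXY : X + Y = (n:ℤ) := by rw [hX, hY, hn]; push_cast [Nat.cast_sub hab]; ring
  have hδp : δ * p = X % p + Y % p - (n:ℤ) % p := by
    have e1 := Int.mul_ediv_add_emod X p
    have e2 := Int.mul_ediv_add_emod Y p
    have e3 := Int.mul_ediv_add_emod (n:ℤ) p
    have expand : δ * p = (p:ℤ) * ((n:ℤ)/p) - (p:ℤ)*(X/p) - (p:ℤ)*(Y/p) := by rw [hδ]; ring
    linarith [e1, e2, e3, expand, hXY]
  have hδ01 : 0 ≤ δ ∧ δ ≤ 1 := by
    have bX1 := Int.emod_nonneg X (ne_of_gt hppos)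
    have bX2 := Int.emod_lt_of_pos X hppos
    have bY1 := Int.emod_nonneg Y (ne_of_gt hppos)
    have bY2 := Int.emod_lt_of_pos Y hppos
    have bN1 := Int.emod_nonneg (n:ℤ) (ne_of_gt hppos)
    have bN2 := Int.emod_lt_of_pos (n:ℤ) hppos
    constructor
    · have h1 : (-1:ℤ) * p < δ * p := by linarith
      have := lt_of_mul_lt_mul_right h1 hppos.le
      omega
    · have h1 : δ * p < 2 * p := by linarith
      have := lt_of_mul_lt_mul_right h1 hppos.le
      omega
  -- Legendre
  have hlog : ∀ t : ℕ, t ≤ m → padicValNat p t.factorial = t / p := by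
    intro t ht
    have hlt : Nat.log p t < 2 := by
      rcases Nat.eq_zero_or_pos t with h0 | h0
      · rw [h0]; simp
      · exact Nat.log_lt_of_lt_pow (by omega) (by omega)
    rw [padicValNat_factorial hlt, Nat.Ico_succ_singleton, Finset.sum_singleton, pow_one]
  have hnm : n ≤ m := by omega
  have hchooseval : ∀ j : ℕ, j ≤ n →
      padicValNat p (n.choose j) + j / p + (n - j) / p = n / p := by
    intro j hjn
    have hfac := Nat.choose_mul_factorial_mul_factorial hjn
    have hCne : n.choose j ≠ 0 := (Nat.choose_pos hjn).ne'
    have hv : padicValNat p (n.choose j * j.factorial * (n-j).factorial)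
        = padicValNat p (n.choose j) + padicValNat p j.factorial
          + padicValNat p (n-j).factorial := by
      rw [padicValNat.mul (mul_ne_zero hCne (Nat.factorial_ne_zero j)) (Nat.factorial_ne_zero _),
        padicValNat.mul hCne (Nat.factorial_ne_zero j)]
    rw [hfac, hlog j (by omega), hlog (n-j) (by omega), hlog n hnm] at hv
    omega
  rw [hqQv]
  by_cases hlam : lam = 0
  · -- λ = 0 : exact value of Qv
    subst hlam
    have hQv0 : Qv = ∑ j ∈ Finset.range (n+1),
        (if a + j = k then ((-1:ℚ)^j * (n.choose j)) else 0) := by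
      rw [hQv, if_pos rfl, ← Finset.sum_add_distrib]
      refine Finset.sum_congr rfl fun j hj => ?_
      have hexp : (-1 - ((0:ℕ):ℤ)) = -1 := by simp
      by_cases haj : a + j = k
      · have hdz : dq j = 0 := by
          simp only [hdq]
          push_cast [← haj]
          ring
        rw [if_pos haj, hexp, hdz]
        norm_num
      · have hdz : dq j ≠ 0 := by
          simp only [hdq]
          intro h0
          apply haj
          have : ((a + j : ℕ) : ℚ) = (k : ℚ) := by push_cast; linarith
          exact_mod_cast this
        have hcqd : cq j = -(dq j) * ((-1:ℚ)^j * (n.choose j)) := by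
          simp only [hcq, hdq]; ring
        rw [if_neg haj, hexp, zpow_neg_one, hcqd]
        field_simp
        ring
      -- end per-term
    by_cases hrangek : a ≤ k ∧ k ≤ b
    · obtain ⟨hak, hkb⟩ := hrangek
      have hj0mem : k - a ∈ Finset.range (n+1) := by
        simp only [Finset.mem_range]; omega
      have hQv1 : Qv = (-1:ℚ)^(k-a) * (n.choose (k-a)) := by
        rw [hQv0, Finset.sum_eq_single (k-a)]
        · rw [if_pos (by omega)]
        · intro j hj hne
          rw [if_neg (by simp only [Finset.mem_range] at hj; omega)]
        · intro habs; exact absurd hj0mem habs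
      have hvQ : padicValRat p Qv = (padicValNat p (n.choose (k-a)) : ℤ) := by
        rcases Nat.even_or_odd (k-a) with hev | hod
        · rw [hQv1, hev.neg_one_pow, one_mul, padicValRat.of_nat]
        · rw [hQv1, hod.neg_one_pow, neg_one_mul, padicValRat.neg, padicValRat.of_nat]
      rw [hvQ]
      have hcv := hchooseval (k-a) (by omega)
      have hcvz : (padicValNat p (n.choose (k-a)) : ℤ)
          + (((k-a) / p : ℕ) : ℤ) + (((n-(k-a)) / p : ℕ) : ℤ) = (((n / p : ℕ)) : ℤ) := by
        exact_mod_cast congrArg (Nat.cast : ℕ → ℤ) hcv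
      have hXc : X = ((k - a : ℕ) : ℤ) := by rw [hX]; omega
      have hYc : Y = ((n - (k-a) : ℕ) : ℤ) := by rw [hY, hn]; omega
      have c1 : ((n / p : ℕ) : ℤ) = (n:ℤ)/(p:ℤ) := Int.natCast_ediv n p
      have c2 : (((k-a) / p : ℕ) : ℤ) = ((k-a : ℕ):ℤ)/(p:ℤ) := Int.natCast_ediv _ p
      have c3 : (((n-(k-a)) / p : ℕ) : ℤ) = ((n-(k-a) : ℕ):ℤ)/(p:ℤ) := Int.natCast_ediv _ p
      rw [hXc, hYc, ← c1, ← c2, ← c3]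
      push_cast
      linarith [hcvz]
    · exfalso
      apply hq0
      rw [hqQv, hQv0, Finset.sum_eq_zero]
      intro j hj
      rw [if_neg]
      simp only [Finset.mem_range] at hj
      omega
  · -- λ ≥ 1
    have hlam1 : 1 ≤ lam := Nat.one_le_iff_ne_zero.mpr hlam
    have hQvsum : Qv = ∑ j ∈ Finset.range (n+1),
        (cq j * (-1)^lam * lam.factorial) * (dq j) ^ (-1 - (lam:ℤ)) := by
      rw [hQv, if_neg hlam, zero_add]
    set β : ℤ := -(lam:ℤ) + (n:ℤ)/(p:ℤ) - X/(p:ℤ) - Y/(p:ℤ) with hβ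
    have hterm : ∀ j ∈ Finset.range (n+1),
        (cq j * (-1)^lam * lam.factorial) * (dq j) ^ (-1 - (lam:ℤ)) = 0
        ∨ β ≤ padicValRat p ((cq j * (-1)^lam * lam.factorial) * (dq j) ^ (-1 - (lam:ℤ))) := by
      intro j hj
      have hjn : j ≤ n := by simp only [Finset.mem_range] at hj; omega
      by_cases haj : a + j = k
      · left
        have hz : cq j = 0 := by
          have hzz : ((k:ℚ) - a - j) = 0 := by push_cast [← haj]; ring
          simp only [hcq, hzz, mul_zero]
        rw [hz, zero_mul, zero_mul, zero_mul]
      · right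
        set D : ℤ := (a:ℤ) + j - k with hD
        have hDne : D ≠ 0 := by rw [hD]; omega
        have hdqD : dq j = ((D : ℤ) : ℚ) := by rw [hdq, hD]; push_cast; ring
        have hdqne : dq j ≠ 0 := by rw [hdqD]; exact Int.cast_ne_zero.mpr hDne
        have htm : (cq j * (-1)^lam * lam.factorial) * (dq j) ^ (-1 - (lam:ℤ))
            = (-1:ℚ)^(j+1+lam) * ((n.choose j : ℚ) * ((lam.factorial : ℚ) * ((dq j)^lam)⁻¹)) := by
          rw [show (-1 - (lam:ℤ)) = -(1 + (lam:ℤ)) by ring, zpow_neg, zpow_add₀ hdqne,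
            zpow_one, zpow_natCast]
          have hkk : cq j = -(dq j) * ((-1:ℚ)^j * (n.choose j)) := by
            simp only [hcq, hdq]; ring
          rw [hkk, mul_inv]
          field_simp
          ring
        have hCne : (n.choose j : ℚ) ≠ 0 := by
          exact_mod_cast (Nat.choose_pos hjn).ne'
        have hFne : (lam.factorial : ℚ) ≠ 0 := by
          exact_mod_cast (Nat.factorial_pos lam).ne'
        have hPne : ((dq j)^lam) ≠ 0 := pow_ne_zero _ hdqne
        have hv1 : padicValRat p ((n.choose j : ℚ) * ((lam.factorial:ℚ) * ((dq j)^lam)⁻¹))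
            = (padicValNat p (n.choose j) : ℤ) + (padicValNat p lam.factorial : ℤ)
              - (lam : ℤ) * padicValRat p (dq j) := by
          rw [padicValRat.mul hCne (mul_ne_zero hFne (inv_ne_zero hPne)),
            padicValRat.mul hFne (inv_ne_zero hPne), padicValRat.inv,
            padicValRat.pow (dq j), padicValRat.of_nat, padicValRat.of_nat]
          ring
        have hvterm : padicValRat p ((cq j * (-1)^lam * lam.factorial) * (dq j) ^ (-1 - (lam:ℤ)))
            = (padicValNat p (n.choose j) : ℤ) + (padicValNat p lam.factorial : ℤ)
              - (lam : ℤ) * padicValRat p (dq j) := by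
          rcases Nat.even_or_odd (j+1+lam) with hev | hod
          · rw [htm, hev.neg_one_pow, one_mul, hv1]
          · rw [htm, hod.neg_one_pow, neg_one_mul, padicValRat.neg, hv1]
        have hvdq : padicValRat p (dq j) = (padicValNat p D.natAbs : ℤ) := by
          rw [hdqD, padicValRat.of_int]
          rfl
        have hDabs : D.natAbs ≤ m := by rw [hD] at *; omega
        have hvD_le : padicValNat p D.natAbs ≤ 1 := by
          by_contra hcon
          push_neg at hcon
          have hdvd : p^2 ∣ D.natAbs :=
            dvd_trans (pow_dvd_pow p (by omega)) pow_padicValNat_dvd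
          have hDpos : 0 < D.natAbs := by omega
          have := Nat.le_of_dvd hDpos hdvd
          omega
        rw [hvterm, hvdq]
        have hvf : (0:ℤ) ≤ (padicValNat p lam.factorial : ℤ) := by positivity
        have hvC0 : (0:ℤ) ≤ (padicValNat p (n.choose j) : ℤ) := by positivity
        by_cases hpd : p ∣ D.natAbs
        · -- p divides D : use the carry identity
          have hpD : (p:ℤ) ∣ D := Int.dvd_natAbs.mp (Int.natCast_dvd_natCast.mpr hpd)
          obtain ⟨cc, hcc⟩ := hpD
          have hDval : (a:ℤ) + (j:ℤ) - (k:ℤ) = (p:ℤ) * cc := by rw [← hD]; exact hcc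
          have hmj : (j:ℤ) % (p:ℤ) = X % (p:ℤ) := by
            have hjX : (j:ℤ) = X + (p:ℤ) * cc := by rw [hX]; linarith [hDval]
            rw [hjX, Int.add_mul_emod_self_left]
          have hmnj : ((n - j : ℕ):ℤ) % (p:ℤ) = Y % (p:ℤ) := by
            have hjY : ((n - j : ℕ):ℤ) = Y + (p:ℤ) * (-cc) := by
              have hcast1 : ((n - j : ℕ):ℤ) = (n:ℤ) - (j:ℤ) := by omega
              have hcast2 : (n:ℤ) = (b:ℤ) - (a:ℤ) := by omega
              rw [hcast1, hY]
              linarith [hDval, hcast2]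
            rw [hjY, Int.add_mul_emod_self_left]
          have hε : (n:ℤ)/(p:ℤ) - (j:ℤ)/(p:ℤ) - ((n-j:ℕ):ℤ)/(p:ℤ) = δ := by
            have f1 := Int.mul_ediv_add_emod (j:ℤ) (p:ℤ)
            have f2 := Int.mul_ediv_add_emod ((n-j:ℕ):ℤ) (p:ℤ)
            have f3 := Int.mul_ediv_add_emod (n:ℤ) (p:ℤ)
            have hsum2 : (j:ℤ) + ((n-j:ℕ):ℤ) = (n:ℤ) := by omega
            have expand2 : ((n:ℤ)/(p:ℤ) - (j:ℤ)/(p:ℤ) - ((n-j:ℕ):ℤ)/(p:ℤ)) * p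
                = (p:ℤ) * ((n:ℤ)/(p:ℤ)) - (p:ℤ)*((j:ℤ)/(p:ℤ)) - (p:ℤ)*(((n-j:ℕ):ℤ)/(p:ℤ)) := by
              ring
            have hεp : ((n:ℤ)/(p:ℤ) - (j:ℤ)/(p:ℤ) - ((n-j:ℕ):ℤ)/(p:ℤ)) * p
                = (j:ℤ)%p + ((n-j:ℕ):ℤ)%p - (n:ℤ)%p := by
              linarith [f1, f2, f3, expand2, hsum2]
            have heq2 : ((n:ℤ)/(p:ℤ) - (j:ℤ)/(p:ℤ) - ((n-j:ℕ):ℤ)/(p:ℤ)) * p = δ * p := by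
              rw [hεp, hδp, hmj, hmnj]
            exact mul_right_cancel₀ (ne_of_gt hppos) heq2
          have hcv := hchooseval j hjn
          have hcvz : (padicValNat p (n.choose j) : ℤ)
              + ((j / p : ℕ) : ℤ) + (((n-j) / p : ℕ) : ℤ) = (((n / p : ℕ)) : ℤ) := by
            exact_mod_cast congrArg (Nat.cast : ℕ → ℤ) hcv
          have c1 : ((n / p : ℕ) : ℤ) = (n:ℤ)/(p:ℤ) := Int.natCast_ediv n p
          have c2 : ((j / p : ℕ) : ℤ) = (j:ℤ)/(p:ℤ) := Int.natCast_ediv j p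
          have c3 : (((n-j) / p : ℕ) : ℤ) = ((n-j : ℕ):ℤ)/(p:ℤ) := Int.natCast_ediv _ p
          have hvC : (padicValNat p (n.choose j) : ℤ) = δ := by
            rw [c1, c2, c3] at hcvz
            linarith [hε, hcvz]
          have hlamz : (1:ℤ) ≤ (lam:ℤ) := by exact_mod_cast hlam1
          have hv01 : padicValNat p D.natAbs = 0 ∨ padicValNat p D.natAbs = 1 := by omega
          rcases hv01 with hv0 | hv0
          · rw [hv0]
            simp only [Nat.cast_zero, mul_zero, sub_zero]
            linarith [hvC, hvf, hδ01.1, hδ01.2, hβ, hδ, hlamz]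
          · rw [hv0]
            simp only [Nat.cast_one, mul_one]
            linarith [hvC, hvf, hδ01.1, hδ01.2, hβ, hδ, hlamz]
        · have hv0 : padicValNat p D.natAbs = 0 := padicValNat.eq_zero_of_not_dvd hpd
          have hlamz : (1:ℤ) ≤ (lam:ℤ) := by exact_mod_cast hlam1
          rw [hv0]
          simp only [Nat.cast_zero, mul_zero, sub_zero]
          linarith [hvC0, hvf, hδ01.1, hδ01.2, hβ, hδ, hlamz]
    have hres := padic_sum_bound (Finset.range (n+1))
      (fun j => (cq j * (-1)^lam * lam.factorial) * (dq j) ^ (-1 - (lam:ℤ))) β hterm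
    rcases hres with h0 | hle
    · exact absurd (hqQv.trans (hQvsum.trans h0)) hq0
    · rw [← hQvsum] at hle
      rw [hβ] at hle
      linarith [hle]
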